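/- If C ≤ R^n is a modular linear code of index r over a finite Frobenius ring R, generated by the columns g₁,...,gₙ of G ∈ R^{k×n}, then for all d ∈ R^n: Σ_{c∈C} w_hom(c)·w_hom(c+d) = |C|·(n² + rn − r·w_hom(d)). -/

import Mathlib

open scoped Classical

/-- The normalized homogeneous weight (real-valued) defined from an additive
character. -/
noncomputable def whomR {R : Type} [Ring R] [Fintype R] (χ : AddChar R ℂ) (x : R) : ℝ :=
  (1 - (Fintype.card Rˣ : ℂ)⁻¹ * ∑ u : Rˣ, χ ((u : R) * x)).re

/-- The homogeneous weight of a word, extended additively to \`R^n\`. -/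
noncomputable def whomV {R : Type} [Ring R] [Fintype R] (χ : AddChar R ℂ)
    {n : ℕ} (c : Fin n → R) : ℝ :=
  ∑ j, whomR χ (c j)

/-- A generating character: a character of `(R,+)` whose kernel contains no
nonzero left ideal. -/
def IsGenChar {R : Type} [Ring R] [Fintype R] (χ : AddChar R ℂ) : Prop :=
  ∀ I : Ideal R, I ≠ ⊥ → ∃ x ∈ I, χ x ≠ 1

namespace ModCorr

variable {R : Type} [Ring R] [Fintype R]

lemma unit_of_mul_eq_one {x y : R} (h : x * y = 1) : IsUnit x := by
  have hsurj : Function.Surjective (fun r : R => x * r) := by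
    intro s
    refine ⟨y * s, ?_⟩
    show x * (y * s) = s
    rw [← mul_assoc, h, one_mul]
  have hinj : Function.Injective (fun r : R => x * r) :=
    Function.Surjective.injective_of_finite (Equiv.refl R) hsurj
  have h2 : y * x = 1 := by
    have : x * (y * x) = x * 1 := by rw [← mul_assoc, h, one_mul, mul_one]
    exact hinj this
  exact ⟨⟨x, y, h, h2⟩, rfl⟩

/-- the character `t ↦ χ (t * b)`. -/
noncomputable def Emap (χ : AddChar R ℂ) : R →+ AddChar R ℂ where
  toFun b := χ.compAddMonoidHom (AddMonoidHom.mulRight b)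
  map_zero' := by ext t; simp
  map_add' b b' := by
    ext t
    simp [AddChar.add_apply, mul_add, AddChar.map_add_eq_mul]

@[simp] lemma Emap_apply (χ : AddChar R ℂ) (b t : R) : Emap χ b t = χ (t * b) := rfl

/-- the character `t ↦ χ (c * t)`. -/
noncomputable def Gmap (χ : AddChar R ℂ) : R →+ AddChar R ℂ where
  toFun c := χ.mulShift c
  map_zero' := by ext t; simp [AddChar.mulShift_apply]
  map_add' c c' := by
    ext t
    simp [AddChar.add_apply, AddChar.mulShift_apply, add_mul, AddChar.map_add_eq_mul]

@[simp] lemma Gmap_apply (χ : AddChar R ℂ) (c t : R) : Gmap χ c t = χ (c * t) := rfl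

variable {χ : AddChar R ℂ}

lemma Emap_ne_zero (hχ : IsGenChar χ) {b : R} (hb : b ≠ 0) : Emap χ b ≠ 0 := by
  intro h0
  rw [AddChar.eq_zero_iff] at h0
  obtain ⟨x, hx, hx1⟩ := hχ (Ideal.span {b}) (by simpa [Ideal.span_singleton_eq_bot] using hb)
  obtain ⟨a, rfl⟩ := Ideal.mem_span_singleton'.mp hx
  exact hx1 (h0 a)

lemma sum_left_eq_zero (hχ : IsGenChar χ) {b : R} (hb : b ≠ 0) :
    ∑ t : R, χ (t * b) = 0 := by
  have := AddChar.sum_eq_zero_iff_ne_zero.2 (Emap_ne_zero hχ hb)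
  simpa using this

/-- Main counting lemma: a family of characters of `A` with trivial joint kernel
spans all characters. -/
lemma range_eq_top {A B : Type} [AddCommGroup A] [AddCommGroup B] [Fintype A] [Fintype B]
    (F : B →+ AddChar A ℂ) (hker : ∀ a : A, (∀ s, F s a = 1) → a = 0) :
    F.range = ⊤ := by
  set X : AddSubgroup (AddChar A ℂ) := F.range with hX
  -- evaluation map into characters of X
  have evmem : ∀ (a : A), ∀ φ φ' : X, ((φ + φ' : X) : AddChar A ℂ) a
      = (φ : AddChar A ℂ) a * (φ' : AddChar A ℂ) a := by
    intro a φ φ'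
    rw [AddSubgroup.coe_add, AddChar.add_apply]
  let ev : A →+ AddChar X ℂ :=
    { toFun := fun a =>
        { toFun := fun φ => (φ : AddChar A ℂ) a
          map_zero_eq_one' := by simp
          map_add_eq_mul' := fun φ φ' => evmem a φ φ' }
      map_zero' := by ext φ; simp
      map_add' := fun a a' => by
        ext φ
        simp [AddChar.add_apply, AddChar.map_add_eq_mul]
        rfl }
    
  have hev : Function.Injective ev := by
    rw [injective_iff_map_eq_zero]
    intro a ha
    refine hker a (fun s => ?_)
    have : (ev a) ⟨F s, ⟨s, rfl⟩⟩ = 1 := by rw [ha]; simp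
    exact this
  have c1 : Fintype.card A ≤ Fintype.card (AddChar X ℂ) := Fintype.card_le_of_injective _ hev
  have c2 : Fintype.card (AddChar X ℂ) = Fintype.card X := AddChar.card_eq
  have c3 : Fintype.card X ≤ Fintype.card (AddChar A ℂ) :=
    Fintype.card_le_of_injective _ Subtype.val_injective
  have c4 : Fintype.card (AddChar A ℂ) = Fintype.card A := AddChar.card_eq
  have : Nat.card X = Nat.card (AddChar A ℂ) := by
    simp only [Nat.card_eq_fintype_card]
    omega
  exact AddSubgroup.eq_top_of_card_eq _ this

lemma hom_bijective {F : R →+ AddChar R ℂ} (hker : ∀ a : R, (∀ s, F s a = 1) → a = 0) :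
    Function.Bijective F := by
  have hr := range_eq_top F hker
  have hsurj : Function.Surjective F := by
    intro ψ
    have : ψ ∈ F.range := hr ▸ AddSubgroup.mem_top ψ
    exact this
  rw [Fintype.bijective_iff_surjective_and_card]
  exact ⟨hsurj, by rw [AddChar.card_eq]⟩

lemma Gmap_bijective (hχ : IsGenChar χ) : Function.Bijective (Gmap χ) := by
  apply hom_bijective
  intro a ha
  by_contra hne
  have := sum_left_eq_zero hχ hne
  have h1 : ∀ s : R, χ (s * a) = 1 := fun s => ha s
  simp only [h1] at this
  simp at this

/-- right generating property -/
lemma rightGen (hχ : IsGenChar χ) {c : R} (hc : ∀ t, χ (c * t) = 1) : c = 0 := by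
  have hinj := (Gmap_bijective hχ).injective
  have : Gmap χ c = Gmap χ 0 := by
    ext t; simpa using hc t
  exact hinj this

lemma Emap_bijective (hχ : IsGenChar χ) : Function.Bijective (Emap χ) := by
  apply hom_bijective
  intro a ha
  exact rightGen hχ (fun t => ha t)

lemma Emap_inj (hχ : IsGenChar χ) {a b : R} (h : ∀ t, χ (t * a) = χ (t * b)) : a = b := by
  have : Emap χ a = Emap χ b := by ext t; simpa using h t
  exact (Emap_bijective hχ).injective this

/-- The Nakayama bijection: `β b` is the unique element with `χ (β b * t) = χ (t * b)`. -/
noncomputable def betaE (hχ : IsGenChar χ) : R ≃ R :=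
  (Equiv.ofBijective _ (Emap_bijective hχ)).trans (Equiv.ofBijective _ (Gmap_bijective hχ)).symm

lemma beta_spec (hχ : IsGenChar χ) (b t : R) : χ (betaE hχ b * t) = χ (t * b) := by
  have : Gmap χ (betaE hχ b) = Emap χ b := by
    show Gmap χ ((Equiv.ofBijective _ (Gmap_bijective hχ)).symm
        ((Equiv.ofBijective _ (Emap_bijective hχ)) b)) = Emap χ b
    have := (Equiv.ofBijective _ (Gmap_bijective hχ)).apply_symm_apply
      ((Equiv.ofBijective _ (Emap_bijective hχ)) b)
    exact this
  have := DFunLike.congr_fun this t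
  simpa using this

lemma Gmap_inj (hχ : IsGenChar χ) {a b : R} (h : ∀ t, χ (a * t) = χ (b * t)) : a = b := by
  have : Gmap χ a = Gmap χ b := by ext t; simpa using h t
  exact (Gmap_bijective hχ).injective this

/-- β as ring equivalence. -/
noncomputable def betaR (hχ : IsGenChar χ) : R ≃+* R :=
  { betaE hχ with
    map_add' := fun b b' => by
      apply Gmap_inj hχ
      intro t
      show χ (betaE hχ (b + b') * t) = χ ((betaE hχ b + betaE hχ b') * t)
      rw [beta_spec hχ, add_mul, AddChar.map_add_eq_mul, beta_spec hχ, beta_spec hχ,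
        mul_add, AddChar.map_add_eq_mul]
    map_mul' := fun b b' => by
      apply Gmap_inj hχ
      intro t
      show χ (betaE hχ (b * b') * t) = χ (betaE hχ b * betaE hχ b' * t)
      have h1 : χ (betaE hχ (b * b') * t) = χ (t * (b * b')) := beta_spec hχ _ t
      have h2 : χ (betaE hχ b * betaE hχ b' * t) = χ (t * (b * b')) := by
        rw [mul_assoc, beta_spec hχ b, mul_assoc, beta_spec hχ b', mul_assoc]
      rw [h1, h2] }

lemma betaR_spec (hχ : IsGenChar χ) (b t : R) : χ (betaR hχ b * t) = χ (t * b) :=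
  beta_spec hχ b t

lemma betaR_symm_spec (hχ : IsGenChar χ) (b t : R) :
    χ (b * t) = χ (t * (betaR hχ).symm b) := by
  have := betaR_spec hχ ((betaR hχ).symm b) t
  rwa [RingEquiv.apply_symm_apply] at this


section Lovasz

variable (S : Type) [Ring S]

noncomputable def countInj (X M : Type) [AddCommGroup X] [Module S X]
    [AddCommGroup M] [Module S M] : ℕ :=
  Nat.card {f : X →ₗ[S] M // Function.Injective f}

variable {S}

lemma finite_linearMap {X M : Type} [AddCommGroup X] [Module S X]
    [AddCommGroup M] [Module S M] [Finite X] [Finite M] : Finite (X →ₗ[S] M) :=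
  Finite.of_injective (fun f => (f : X → M)) (DFunLike.coe_injective)

lemma countInj_congr {X X' M : Type} [AddCommGroup X] [Module S X] [AddCommGroup X']
    [Module S X'] [AddCommGroup M] [Module S M] (e : X ≃ₗ[S] X') :
    countInj S X M = countInj S X' M := by
  apply Nat.card_congr
  refine ⟨fun f => ⟨f.1.comp (e.symm : X' →ₗ[S] X),
      f.2.comp e.symm.injective⟩,
    fun g => ⟨g.1.comp (e : X →ₗ[S] X'), g.2.comp e.injective⟩, ?_, ?_⟩
  · intro f
    apply Subtype.ext
    apply LinearMap.ext
    intro x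
    simp
  · intro g
    apply Subtype.ext
    apply LinearMap.ext
    intro x
    simp

/-- homs partitioned by kernel -/
lemma card_hom_eq_sum (X M : Type) [AddCommGroup X] [Module S X]
    [AddCommGroup M] [Module S M] [Finite X] [Finite M] :
    Nat.card (X →ₗ[S] M) = ∑ᶠ N : Submodule S X, countInj S (X ⧸ N) M := by
  haveI : Finite (Submodule S X) := Finite.of_injective _ SetLike.coe_injective
  haveI : Finite (X →ₗ[S] M) := finite_linearMap
  have e1 : (X →ₗ[S] M) ≃ Σ N : Submodule S X, {f : X →ₗ[S] M // LinearMap.ker f = N} :=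
    (Equiv.sigmaFiberEquiv _).symm
  have e2 : ∀ N : Submodule S X,
      {f : X →ₗ[S] M // LinearMap.ker f = N} ≃ {g : (X ⧸ N) →ₗ[S] M // Function.Injective g} := by
    intro N
    refine ⟨fun f => ⟨N.liftQ f.1 (le_of_eq f.2.symm), ?_⟩,
      fun g => ⟨g.1.comp N.mkQ, ?_⟩, ?_, ?_⟩
    · rw [← LinearMap.ker_eq_bot]
      exact Submodule.ker_liftQ_eq_bot _ _ _ (le_of_eq f.2)
    · rw [LinearMap.ker_comp, LinearMap.ker_eq_bot.2 g.2, Submodule.comap_bot,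
        Submodule.ker_mkQ]
    · intro f
      apply Subtype.ext
      apply LinearMap.ext
      intro x
      exact DFunLike.congr_fun (N.liftQ_mkQ f.1 _) x
    · intro g
      apply Subtype.ext
      apply LinearMap.ext
      intro x
      obtain ⟨y, rfl⟩ := N.mkQ_surjective x
      rfl
  have e3 : (X →ₗ[S] M) ≃ Σ N : Submodule S X, {g : (X ⧸ N) →ₗ[S] M // Function.Injective g} :=
    e1.trans (Equiv.sigmaCongrRight e2)
  rw [Nat.card_congr e3]
  haveI : Fintype (Submodule S X) := Fintype.ofFinite _
  haveI : ∀ N : Submodule S X, Finite (X ⧸ N) := fun N => Finite.of_surjective _ N.mkQ_surjective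
  haveI : ∀ N : Submodule S X, Fintype {g : (X ⧸ N) →ₗ[S] M // Function.Injective g} := by
    intro N
    haveI : Finite ((X ⧸ N) →ₗ[S] M) := finite_linearMap
    exact Fintype.ofFinite _
  rw [Nat.card_eq_fintype_card, Fintype.card_sigma]
  rw [finsum_eq_sum_of_fintype]
  refine Finset.sum_congr rfl (fun N _ => ?_)
  rw [countInj, Nat.card_eq_fintype_card]

lemma quotient_card_lt {X : Type} [AddCommGroup X] [Module S X] [Finite X]
    {N : Submodule S X} (hN : N ≠ ⊥) : Nat.card (X ⧸ N) < Nat.card X := by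
  haveI : Finite (X ⧸ N) := Quotient.finite _
  have hsurj := N.mkQ_surjective
  have hle : Nat.card (X ⧸ N) ≤ Nat.card X := Nat.card_le_card_of_surjective _ hsurj
  rcases lt_or_eq_of_le hle with h | h
  · exact h
  · exfalso
    obtain ⟨x, hx, hx0⟩ := (Submodule.ne_bot_iff N).mp hN
    haveI : Fintype (X ⧸ N) := Fintype.ofFinite _
    haveI : Fintype X := Fintype.ofFinite _
    have hbij : Function.Bijective N.mkQ := by
      rw [Fintype.bijective_iff_surjective_and_card]
      constructor
      · exact hsurj
      · rw [← Nat.card_eq_fintype_card, ← Nat.card_eq_fintype_card, h]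
    have : x = 0 := by
      apply hbij.injective
      rw [map_zero]
      exact (Submodule.Quotient.mk_eq_zero N).2 hx
    exact hx0 this

lemma countInj_eq_of_countHom_eq (B C : Type) [AddCommGroup B] [Module S B]
    [AddCommGroup C] [Module S C] [Finite B] [Finite C]
    (hyp : ∀ (X : Type) [AddCommGroup X] [Module S X] [Finite X],
      Nat.card (X →ₗ[S] B) = Nat.card (X →ₗ[S] C)) :
    ∀ (n : ℕ) (X : Type) [AddCommGroup X] [Module S X] [Finite X],
      Nat.card X ≤ n → countInj S X B = countInj S X C := by
  intro n
  induction n with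
  | zero =>
    intro X _ _ _ hX
    have : Nat.card X ≠ 0 := Nat.card_ne_zero.2 ⟨⟨0⟩, inferInstance⟩
    omega
  | succ n ih =>
    intro X _ _ _ hX
    haveI : Finite (Submodule S X) := Finite.of_injective _ SetLike.coe_injective
    haveI : Fintype (Submodule S X) := Fintype.ofFinite _
    have key := hyp X
    rw [card_hom_eq_sum, card_hom_eq_sum, finsum_eq_sum_of_fintype,
      finsum_eq_sum_of_fintype] at key
    have hsplit : ∀ (M : Type) [AddCommGroup M] [Module S M] [Finite M],
        ∑ N : Submodule S X, countInj S (X ⧸ N) M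
          = countInj S X M
            + ∑ N ∈ (Finset.univ.erase (⊥ : Submodule S X)), countInj S (X ⧸ N) M := by
      intro M _ _ _
      rw [← Finset.add_sum_erase _ _ (Finset.mem_univ (⊥ : Submodule S X))]
      congr 1
      exact countInj_congr (Submodule.quotEquivOfEqBot _ rfl)
    rw [hsplit B, hsplit C] at key
    have htail : ∑ N ∈ (Finset.univ.erase (⊥ : Submodule S X)), countInj S (X ⧸ N) B
        = ∑ N ∈ (Finset.univ.erase (⊥ : Submodule S X)), countInj S (X ⧸ N) C := by
      refine Finset.sum_congr rfl (fun N hN => ?_)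
      have hNb : N ≠ ⊥ := Finset.ne_of_mem_erase hN
      have hlt := quotient_card_lt (N := N) hNb
      haveI : Finite (X ⧸ N) := Finite.of_surjective _ N.mkQ_surjective
      exact ih (X ⧸ N) (by omega)
    omega

theorem lovasz_cancel (A B C : Type) [AddCommGroup A] [Module S A] [AddCommGroup B]
    [Module S B] [AddCommGroup C] [Module S C] [Finite A] [Finite B] [Finite C]
    (e : (A × B) ≃ₗ[S] (A × C)) : Nonempty (B ≃ₗ[S] C) := by
  have hyp : ∀ (X : Type) [AddCommGroup X] [Module S X] [Finite X],
      Nat.card (X →ₗ[S] B) = Nat.card (X →ₗ[S] C) := by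
    intro X _ _ _
    haveI : Finite (X →ₗ[S] A) := finite_linearMap
    haveI : Finite (X →ₗ[S] B) := finite_linearMap
    haveI : Finite (X →ₗ[S] C) := finite_linearMap
    have h1 : Nat.card (X →ₗ[S] (A × B)) = Nat.card (X →ₗ[S] (A × C)) :=
      Nat.card_congr ⟨fun f => (e : (A × B) →ₗ[S] (A × C)).comp f,
        fun g => (e.symm : (A × C) →ₗ[S] (A × B)).comp g,
        fun f => by apply LinearMap.ext; intro x; simp,
        fun g => by apply LinearMap.ext; intro x; simp⟩
    have h2 : ∀ (M M' : Type) [AddCommGroup M] [Module S M] [AddCommGroup M'] [Module S M'],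
        Nat.card (X →ₗ[S] (M × M')) = Nat.card (X →ₗ[S] M) * Nat.card (X →ₗ[S] M') := by
      intro M M' _ _ _ _
      rw [← Nat.card_prod]
      apply Nat.card_congr
      exact ⟨fun f => ((LinearMap.fst S M M').comp f, (LinearMap.snd S M M').comp f),
        fun g => (g.1).prod (g.2),
        fun f => by apply LinearMap.ext; intro x; simp [LinearMap.prod],
        fun g => by
          apply Prod.ext <;> (apply LinearMap.ext; intro x; simp [LinearMap.prod])⟩
    rw [h2, h2] at h1
    have hA : Nat.card (X →ₗ[S] A) ≠ 0 := Nat.card_ne_zero.2 ⟨⟨0⟩, inferInstance⟩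
    exact Nat.eq_of_mul_eq_mul_left (Nat.pos_of_ne_zero hA) h1
  have hinj := countInj_eq_of_countHom_eq B C hyp (Nat.card B) B le_rfl
  have hBB : countInj S B B ≠ 0 := by
    rw [countInj]
    refine Nat.card_ne_zero.2 ⟨⟨⟨LinearMap.id, fun a b h => h⟩⟩, ?_⟩
    haveI : Finite (B →ₗ[S] B) := finite_linearMap
    exact Finite.of_injective _ Subtype.val_injective
  rw [hinj] at hBB
  have : Nonempty {f : B →ₗ[S] C // Function.Injective f} := Nat.card_ne_zero.1 hBB |>.1
  obtain ⟨f, hf⟩ := this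
  have hcard : Nat.card B = Nat.card C := by
    have := Nat.card_congr e.toEquiv
    rw [Nat.card_prod, Nat.card_prod] at this
    have hA : Nat.card A ≠ 0 := Nat.card_ne_zero.2 ⟨⟨0⟩, inferInstance⟩
    exact Nat.eq_of_mul_eq_mul_left (Nat.pos_of_ne_zero hA) this
  haveI : Fintype B := Fintype.ofFinite _
  haveI : Fintype C := Fintype.ofFinite _
  have hbij : Function.Bijective f := by
    rw [Fintype.bijective_iff_injective_and_card]
    exact ⟨hf, by rw [← Nat.card_eq_fintype_card, ← Nat.card_eq_fintype_card, hcard]⟩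
  exact ⟨LinearEquiv.ofBijective f hbij⟩

end Lovasz

section H1x
lemma isUnit_of_leftmul_inj {u : R} (h : ∀ r, u * r = 0 → r = 0) : IsUnit u := by
  have hinj : Function.Injective (fun r : R => u * r) := by
    intro a b hab
    have h0 : u * (a - b) = 0 := by
      rw [mul_sub]
      exact sub_eq_zero_of_eq hab
    exact sub_eq_zero.mp (h _ h0)
  have hsurj : Function.Surjective (fun r : R => u * r) :=
    Function.Injective.surjective_of_finite (Equiv.refl R) hinj
  obtain ⟨v, hv⟩ := hsurj 1
  exact unit_of_mul_eq_one hv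

lemma exists_idem_pow (p : R) : ∃ j : ℕ, 1 ≤ j ∧ p ^ j * p ^ j = p ^ j := by
  obtain ⟨a, b, hne, hab⟩ :=
    Finite.exists_ne_map_eq_of_infinite (fun n : ℕ => p ^ (n + 1))
  -- extract m ≥ 1, c ≥ 1 with p ^ m = p ^ (m + c)
  obtain ⟨m, c, hm, hc, hmc⟩ : ∃ m c : ℕ, 1 ≤ m ∧ 1 ≤ c ∧ p ^ m = p ^ (m + c) := by
    rcases Nat.lt_or_ge a b with hlt | hge
    · refine ⟨a + 1, b - a, by omega, by omega, ?_⟩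
      rw [hab]; congr 1; omega
    · have hlt : b < a := by
        rcases Nat.lt_or_ge b a with h' | h'
        · exact h'
        · exact absurd (Nat.le_antisymm hge h') (fun e => hne e.symm)
      refine ⟨b + 1, a - b, by omega, by omega, ?_⟩
      rw [← hab]; congr 1; omega
  have hstep : ∀ i : ℕ, p ^ (m + i) = p ^ (m + i + c) := by
    intro i
    have := congrArg (fun z => z * p ^ i) hmc
    rw [← pow_add, ← pow_add] at this
    rw [show m + i + c = m + c + i by omega]
    exact this
  have hiter : ∀ t i : ℕ, p ^ (m + i) = p ^ (m + i + t * c) := by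
    intro t
    induction t with
    | zero => intro i; simp
    | succ t ih =>
      intro i
      rw [ih i]
      have := hstep (i + t * c)
      rw [show m + (i + t * c) = m + i + t * c by omega] at this
      rw [this]
      congr 1
      ring
  refine ⟨m * c, Nat.mul_pos hm hc, ?_⟩
  rw [← pow_add]
  have hle : m ≤ m * c := Nat.le_mul_of_pos_right m hc
  have := hiter m (m * c - m)
  have e1 : m + (m * c - m) = m * c := by omega
  rw [e1] at this
  exact this.symm

/-- left multiplication as a right-module map. -/
def mulLeftLin (a : R) : R →ₗ[Rᵐᵒᵖ] R where
  toFun x := a * x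
  map_add' := mul_add a
  map_smul' m x := by
    simp only [MulOpposite.smul_eq_mul_unop, RingHom.id_apply, mul_assoc]

noncomputable def Msub (a : R) : Submodule Rᵐᵒᵖ R := LinearMap.range (mulLeftLin a)

lemma mem_Msub {a x : R} : x ∈ Msub a ↔ ∃ y, a * y = x := Iff.rfl

lemma mem_Msub_idem {a x : R} (ha : a * a = a) : x ∈ Msub a ↔ a * x = x := by
  constructor
  · rintro ⟨y, rfl⟩
    show a * (a * y) = a * y
    rw [← mul_assoc, ha]
  · intro h
    exact ⟨x, h⟩

/-- splitting along an idempotent. -/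
noncomputable def splitIdem (a : R) (ha : a * a = a) :
    R ≃ₗ[Rᵐᵒᵖ] (Msub a × Msub (1 - a)) where
  toFun x := (⟨a * x, ⟨x, rfl⟩⟩, ⟨(1 - a) * x, ⟨x, rfl⟩⟩)
  map_add' x y := by
    ext <;> simp [mul_add]
  map_smul' m x := by
    ext <;> simp [MulOpposite.smul_eq_mul_unop, mul_assoc]
  invFun uv := uv.1.1 + uv.2.1
  left_inv x := by
    show a * x + (1 - a) * x = x
    rw [sub_mul, one_mul]
    abel
  right_inv uv := by
    have hu := uv.1.2
    have hv := uv.2.2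
    rw [mem_Msub_idem ha] at hu
    have hea : (1 - a) * (1 - a) = 1 - a := by
      rw [sub_mul, one_mul, mul_sub, mul_one, ha]
      abel
    rw [mem_Msub_idem hea] at hv
    have h0 : a * (1 - a) = 0 := by rw [mul_sub, mul_one, ha, sub_self]
    have h0' : (1 - a) * a = 0 := by rw [sub_mul, one_mul, ha, sub_self]
    refine Prod.ext (Subtype.ext ?_) (Subtype.ext ?_)
    · show a * (uv.1.1 + uv.2.1) = uv.1.1
      rw [mul_add, hu]
      rw [show (uv.2.1 : R) = (1 - a) * uv.2.1 from hv.symm, ← mul_assoc, h0, zero_mul,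
        add_zero]
    · show (1 - a) * (uv.1.1 + uv.2.1) = uv.2.1
      rw [mul_add, hv]
      rw [show (uv.1.1 : R) = a * uv.1.1 from hu.symm, ← mul_assoc, h0', zero_mul,
        zero_add]

theorem gen_unit {ι : Type} (h : ι → R) (s b₂ : R)
    (hsb : ∀ i, h i * (s * b₂) = h i) :
    ∃ u : R, IsUnit u ∧ ∀ i, h i * u = h i * s := by
  obtain ⟨j, hj1, hjidem⟩ := exists_idem_pow (s * b₂)
  obtain ⟨p, hp⟩ : ∃ x : R, x = s * b₂ := ⟨_, rfl⟩
  rw [← hp] at hjidem hsb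
  obtain ⟨f, hf⟩ : ∃ x : R, x = p ^ j := ⟨_, rfl⟩
  have hff : f * f = f := by rw [hf]; exact hjidem
  have hhp : ∀ i, ∀ m : ℕ, h i * p ^ (m + 1) = h i := by
    intro i m
    induction m with
    | zero => simpa using hsb i
    | succ m ih =>
      rw [pow_succ, ← mul_assoc, ih]
      simpa using hsb i
  have hhf : ∀ i, h i * f = h i := by
    intro i
    have := hhp i (j - 1)
    rw [Nat.sub_add_cancel hj1] at this
    rw [hf]
    exact this
  obtain ⟨B, hB⟩ : ∃ x : R, x = b₂ * p ^ (j - 1) := ⟨_, rfl⟩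
  have hsB : s * B = f := by
    rw [hB, ← mul_assoc, ← hp, ← pow_succ', hf]
    congr 1
    omega
  obtain ⟨q, hq⟩ : ∃ x : R, x = B * s := ⟨_, rfl⟩
  have hq2 : q * q = B * (f * s) := by
    rw [hq]
    calc B * s * (B * s) = B * (s * (B * s)) := by rw [mul_assoc]
    _ = B * ((s * B) * s) := by rw [← mul_assoc s B s]
    _ = B * (f * s) := by rw [hsB]
  obtain ⟨f', hf'⟩ : ∃ x : R, x = q * q := ⟨_, rfl⟩
  have hq3 : f' * q = f' := by
    rw [hf', hq2, hq]
    calc (B * (f * s)) * (B * s) = B * ((f * s) * (B * s)) := by rw [mul_assoc]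
    _ = B * (f * (s * (B * s))) := by rw [mul_assoc f s (B * s)]
    _ = B * (f * ((s * B) * s)) := by rw [← mul_assoc s B s]
    _ = B * (f * (f * s)) := by rw [hsB]
    _ = B * ((f * f) * s) := by rw [← mul_assoc f f s]
    _ = B * (f * s) := by rw [hff]
  have hf'idem : f' * f' = f' := by
    have h1 : f' * f' = (f' * q) * q := by rw [mul_assoc, ← hf']
    rw [h1, hq3, hq3]
  have hfsf' : (f * s) * f' = f * s := by
    rw [hf', hq2]
    calc (f * s) * (B * (f * s)) = f * (s * (B * (f * s))) := by rw [mul_assoc]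
    _ = f * ((s * B) * (f * s)) := by rw [← mul_assoc s B (f * s)]
    _ = f * (f * (f * s)) := by rw [hsB]
    _ = ((f * f) * f) * s := by rw [← mul_assoc, ← mul_assoc]
    _ = f * s := by rw [hff, hff]
  have hker : ∀ r : R, (f * s) * r = 0 → f' * r = 0 := by
    intro r hr
    rw [hf', hq2, mul_assoc, hr, mul_zero]
  -- module isos
  have E3 : Nonempty (↥(Msub f') ≃ₗ[Rᵐᵒᵖ] ↥(Msub f)) := by
    refine ⟨⟨⟨⟨fun x => ⟨f * (s * x.1), ⟨s * x.1, rfl⟩⟩, ?_⟩, ?_⟩,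
      fun y => ⟨f' * (B * y.1), ⟨B * y.1, rfl⟩⟩, ?_, ?_⟩⟩
    · intro x y
      ext
      show f * (s * (x.1 + y.1)) = f * (s * x.1) + f * (s * y.1)
      rw [mul_add, mul_add]
    · intro m x
      ext
      show f * (s * (x.1 * m.unop)) = (f * (s * x.1)) * m.unop
      rw [← mul_assoc, ← mul_assoc, mul_assoc f s x.1]
    · intro x
      obtain ⟨x, hx⟩ := x
      rw [mem_Msub_idem hf'idem] at hx
      ext
      show f' * (B * (f * (s * x))) = x
      calc f' * (B * (f * (s * x))) = f' * (B * ((f * s) * x)) := by rw [mul_assoc f s x]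
      _ = f' * ((B * (f * s)) * x) := by rw [← mul_assoc B (f * s) x]
      _ = (f' * (B * (f * s))) * x := by rw [← mul_assoc]
      _ = (f' * (q * q)) * x := by rw [← hq2]
      _ = (f' * f') * x := by rw [← hf']
      _ = f' * x := by rw [hf'idem]
      _ = x := hx
    · intro y
      obtain ⟨y, hy⟩ := y
      rw [mem_Msub_idem hff] at hy
      ext
      show f * (s * (f' * (B * y))) = y
      calc f * (s * (f' * (B * y))) = (f * s) * (f' * (B * y)) := by rw [← mul_assoc]
      _ = ((f * s) * f') * (B * y) := by rw [← mul_assoc]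
      _ = (f * s) * (B * y) := by rw [hfsf']
      _ = f * (s * (B * y)) := by rw [mul_assoc]
      _ = f * ((s * B) * y) := by rw [← mul_assoc s B y]
      _ = f * (f * y) := by rw [hsB]
      _ = f * y := congrArg (fun t => f * t) hy
      _ = y := hy
  obtain ⟨e3⟩ := E3
  have hcancel : Nonempty (↥(Msub (1 - f)) ≃ₗ[Rᵐᵒᵖ] ↥(Msub (1 - f'))) := by
    apply lovasz_cancel ↥(Msub f)
    exact ((splitIdem f hff).symm.trans (splitIdem f' hf'idem)).trans
      (LinearEquiv.prodCongr e3 (LinearEquiv.refl _ _))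
  obtain ⟨ψ0⟩ := hcancel
  have he'mem : (1 - f') ∈ Msub (1 - f') := ⟨1, mul_one _⟩
  obtain ⟨δ, hδdef⟩ : ∃ x : R, x = (ψ0.symm ⟨1 - f', he'mem⟩ : R) := ⟨_, rfl⟩
  have hδmem : δ ∈ Msub (1 - f) := hδdef ▸ (ψ0.symm ⟨1 - f', he'mem⟩).2
  obtain ⟨z, hz⟩ := hδmem
  have hz' : (1 - f) * z = δ := hz
  have hfδ : f * δ = 0 := by
    rw [← hz', ← mul_assoc]
    have h0 : f * (1 - f) = 0 := by rw [mul_sub, mul_one, hff, sub_self]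
    rw [h0, zero_mul]
  have hψval : ∀ y : R, (ψ0.symm ⟨(1 - f') * y, ⟨y, rfl⟩⟩ : R) = δ * y := by
    intro y
    have harg : (⟨(1 - f') * y, ⟨y, rfl⟩⟩ : Msub (1 - f'))
        = (MulOpposite.op y) • ⟨1 - f', he'mem⟩ := by
      ext
      show (1 - f') * y = (1 - f') * MulOpposite.unop (MulOpposite.op y)
      rw [MulOpposite.unop_op]
    rw [harg, map_smul]
    show (ψ0.symm ⟨1 - f', he'mem⟩ : R) * MulOpposite.unop (MulOpposite.op y) = δ * y
    rw [MulOpposite.unop_op, ← hδdef]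
  have hinj' : ∀ r : R, (1 - f') * r = r → δ * r = 0 → r = 0 := by
    intro r hr hδr
    have h0 : ψ0.symm ⟨(1 - f') * r, ⟨r, rfl⟩⟩ = 0 := by
      apply Subtype.ext
      rw [hψval r]
      simpa using hδr
    have h1 := ψ0.symm.injective (h0.trans (map_zero ψ0.symm.toLinearMap).symm)
    have h2 := congrArg Subtype.val h1
    simp only at h2
    rw [hr] at h2
    exact h2
  refine ⟨f * s + δ, isUnit_of_leftmul_inj ?_, ?_⟩
  · intro r hr
    rw [add_mul] at hr
    have h1 : f * ((f * s) * r) = (f * s) * r := by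
      rw [← mul_assoc, ← mul_assoc, hff]
    have h2 : f * (δ * r) = 0 := by rw [← mul_assoc, hfδ, zero_mul]
    have hfsr : (f * s) * r = 0 := by
      calc (f * s) * r = f * ((f * s) * r) + f * (δ * r) := by rw [h1, h2, add_zero]
      _ = f * ((f * s) * r + δ * r) := by rw [mul_add]
      _ = 0 := by rw [hr, mul_zero]
    have hf'r : f' * r = 0 := hker r hfsr
    have hre : (1 - f') * r = r := by rw [sub_mul, one_mul, hf'r, sub_zero]
    have hδr : δ * r = 0 := by
      have := hr
      rw [hfsr, zero_add] at this
      exact this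
    exact hinj' r hre hδr
  · intro i
    rw [mul_add, ← mul_assoc, hhf i]
    have hδ0 : h i * δ = 0 := by
      rw [← hz', ← mul_assoc]
      have h0 : h i * (1 - f) = 0 := by rw [mul_sub, mul_one, hhf i, sub_self]
      rw [h0, zero_mul]
    rw [hδ0, add_zero]

end H1x

section CharSums

variable {χ : AddChar R ℂ}

lemma char_sum_eq_prod {ι : Type} (s : Finset ι) (f : ι → R) :
    χ (∑ i ∈ s, f i) = ∏ i ∈ s, χ (f i) := by
  induction s using Finset.cons_induction with
  | empty => simp
  | cons a s ha ih =>
    rw [Finset.sum_cons, Finset.prod_cons, AddChar.map_add_eq_mul, ih]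

lemma sum_t_mul (hχ : IsGenChar χ) (b : R) :
    ∑ t : R, χ (t * b) = if b = 0 then (Fintype.card R : ℂ) else 0 := by
  by_cases hb : b = 0
  · simp [hb]
  · rw [if_neg hb]
    exact sum_left_eq_zero hχ hb

lemma prod_ite_zero {k : ℕ} (P : Fin k → Prop) [DecidablePred P] (c : ℂ) :
    (∏ i, if P i then c else 0) = if (∀ i, P i) then c ^ k else 0 := by
  by_cases h : ∀ i, P i
  · rw [if_pos h]
    rw [Finset.prod_congr rfl (fun i _ => if_pos (h i)), Finset.prod_const]
    congr 1
    exact Finset.card_univ.trans (Fintype.card_fin k)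
  · rw [if_neg h]
    push_neg at h
    obtain ⟨i0, hi0⟩ := h
    exact Finset.prod_eq_zero (Finset.mem_univ i0) (if_neg hi0)

/-- interchange: sum over tuples of a product = product of sums -/
lemma sum_pi_prod {k : ℕ} (f : Fin k → R → ℂ) :
    ∑ x : Fin k → R, ∏ i, f i (x i) = ∏ i, ∑ t : R, f i t := by
  rw [Finset.prod_univ_sum]
  rw [← Fintype.piFinset_univ]

lemma sum_x_char (hχ : IsGenChar χ) {k : ℕ} (g : Fin k → R) (hg : ∃ i, g i ≠ 0)
    (u : Rˣ) (a : R) :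
    ∑ x : Fin k → R, χ ((u : R) * ((∑ i, x i * g i) + a)) = 0 := by
  obtain ⟨i0, hi0⟩ := hg
  have step1 : ∀ x : Fin k → R,
      χ ((u : R) * ((∑ i, x i * g i) + a))
        = χ ((u : R) * a) * ∏ i, χ ((u : R) * (x i * g i)) := by
    intro x
    rw [mul_add, AddChar.map_add_eq_mul, Finset.mul_sum, char_sum_eq_prod, mul_comm]
  rw [Finset.sum_congr rfl (fun x _ => step1 x), ← Finset.mul_sum]
  rw [sum_pi_prod (fun i t => χ ((u : R) * (t * g i)))]
  have hfac : ∑ t : R, χ ((u : R) * (t * g i0)) = 0 := by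
    have hbij : Function.Bijective (fun t : R => (u : R) * t) :=
      (Units.mulLeft u).bijective
    calc ∑ t : R, χ ((u : R) * (t * g i0)) = ∑ t : R, χ (((u : R) * t) * g i0) := by
          refine Finset.sum_congr rfl (fun t _ => ?_)
          rw [mul_assoc]
    _ = ∑ s : R, χ (s * g i0) := Fintype.sum_bijective _ hbij _ _ (fun t => rfl)
    _ = 0 := sum_left_eq_zero hχ hi0
  rw [Finset.prod_eq_zero (Finset.mem_univ i0) hfac, mul_zero]

lemma conj_char (w : R) : (starRingEnd ℂ) (χ w) = χ (-w) := by
  rw [AddChar.map_neg_eq_inv]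
  exact (Complex.inv_eq_conj (χ.norm_apply w)).symm
  
lemma sum_units_im_zero (z : R) : (∑ u : Rˣ, χ ((u : R) * z)).im = 0 := by
  rw [← Complex.conj_eq_iff_im]
  calc (starRingEnd ℂ) (∑ u : Rˣ, χ ((u : R) * z))
      = ∑ u : Rˣ, χ (((-u : Rˣ) : R) * z) := by
        rw [map_sum]
        refine Finset.sum_congr rfl (fun u _ => ?_)
        rw [conj_char, Units.val_neg, neg_mul]
  _ = ∑ u : Rˣ, χ ((u : R) * z) := Fintype.sum_equiv (Equiv.neg Rˣ) _ _ (fun u => rfl)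

lemma whomR_eq (z : R) :
    whomR χ z = 1 - (Fintype.card Rˣ : ℝ)⁻¹ * (∑ u : Rˣ, χ ((u : R) * z)).re := by
  rw [whomR, Complex.sub_re, Complex.one_re]
  congr 1
  rw [show ((Fintype.card Rˣ : ℂ)) = (((Fintype.card Rˣ : ℝ)) : ℂ) by push_cast; ring,
    ← Complex.ofReal_inv]
  exact Complex.re_ofReal_mul _ _

/-- real parts multiply for our sums -/
lemma re_mul_re (z w : ℂ) (hz : z.im = 0) : z.re * w.re = (z * w).re := by
  rw [Complex.mul_re, hz, zero_mul, sub_zero]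

/-- The big double character sum over codeword space -/
lemma double_sum (hχ : IsGenChar χ) {k : ℕ} (g h : Fin k → R) (a : R) (u₀ v₀ : Rˣ) :
    ∑ x : Fin k → R,
      (χ ((betaR hχ (u₀ : R)) * (∑ i, x i * g i))
        * χ ((betaR hχ (v₀ : R)) * ((∑ i, x i * h i) + a)))
      = χ (a * (v₀ : R)) *
        (if (∀ i, g i * (u₀ : R) + h i * (v₀ : R) = 0)
          then ((Fintype.card R : ℂ)) ^ k else 0) := by
  have key : ∀ x : Fin k → R,
      χ ((betaR hχ (u₀ : R)) * (∑ i, x i * g i))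
        * χ ((betaR hχ (v₀ : R)) * ((∑ i, x i * h i) + a))
      = χ (a * (v₀ : R)) * ∏ i, χ (x i * (g i * (u₀ : R) + h i * (v₀ : R))) := by
    intro x
    have e1 : χ ((betaR hχ (u₀ : R)) * (∑ i, x i * g i))
        = ∏ i, χ ((x i * g i) * (u₀ : R)) := by
      rw [betaR_spec, Finset.sum_mul, char_sum_eq_prod]
    have e2 : χ ((betaR hχ (v₀ : R)) * ((∑ i, x i * h i) + a))
        = χ (a * (v₀ : R)) * ∏ i, χ ((x i * h i) * (v₀ : R)) := by
      rw [betaR_spec, add_mul, AddChar.map_add_eq_mul, Finset.sum_mul, char_sum_eq_prod,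
        mul_comm]
    rw [e1, e2, mul_left_comm, ← Finset.prod_mul_distrib]
    congr 1
    refine Finset.prod_congr rfl (fun i _ => ?_)
    rw [mul_add, AddChar.map_add_eq_mul, ← mul_assoc, ← mul_assoc]
  rw [Finset.sum_congr rfl (fun x _ => key x), ← Finset.mul_sum]
  congr 1
  rw [sum_pi_prod (fun i t => χ (t * (g i * (u₀ : R) + h i * (v₀ : R))))]
  rw [Finset.prod_congr rfl (fun i _ => sum_t_mul hχ (g i * (u₀ : R) + h i * (v₀ : R)))]
  exact prod_ite_zero _ _


/-- fibers of the unit-orbit map all have the stabilizer's cardinality -/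
lemma fiber_card {k : ℕ} (h : Fin k → R) (u₀ : Rˣ) :
    (Finset.univ.filter (fun u : Rˣ => ∀ i, h i * (u : R) = h i * (u₀ : R))).card
      = (Finset.univ.filter (fun z : Rˣ => ∀ i, h i * (z : R) = h i)).card := by
  apply Finset.card_nbij (fun u => u * u₀⁻¹)
  · intro u hu
    simp only [Finset.mem_coe, Finset.mem_filter, Finset.mem_univ, true_and] at hu ⊢
    intro i
    rw [Units.val_mul, ← mul_assoc, hu i, mul_assoc, ← Units.val_mul, mul_inv_cancel,
      Units.val_one, mul_one]
  · intro a _ b _ hab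
    simpa using congrArg (fun t => t * u₀) hab
  · intro z hz
    have hz' : ∀ i, h i * (z : R) = h i := by
      have := Finset.mem_coe.mp hz
      simp only [Finset.mem_filter, Finset.mem_univ, true_and] at this
      exact this
    refine ⟨z * u₀, ?_, ?_⟩
    · apply Finset.mem_coe.mpr
      simp only [Finset.mem_filter, Finset.mem_univ, true_and]
      intro i
      rw [Units.val_mul, ← mul_assoc, hz' i]
    · exact mul_inv_cancel_right z u₀

/-- orbit-stabilizer counting -/
lemma orbit_stab {k : ℕ} (h : Fin k → R) :
    Fintype.card Rˣ
      = (Finset.image (fun u : Rˣ => fun i => h i * (u : R)) Finset.univ).card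
        * (Finset.univ.filter (fun z : Rˣ => ∀ i, h i * (z : R) = h i)).card := by
  rw [← Finset.card_univ]
  rw [Finset.card_eq_sum_card_fiberwise
    (f := fun u : Rˣ => fun i => h i * (u : R))
    (t := Finset.image (fun u : Rˣ => fun i => h i * (u : R)) Finset.univ)
    (fun u _ => Finset.mem_image_of_mem _ (Finset.mem_univ u))]
  rw [Finset.sum_congr rfl (fun w hw => ?_), Finset.sum_const, smul_eq_mul]
  obtain ⟨u₀, _, rfl⟩ := Finset.mem_image.mp hw
  have : (Finset.univ.filter
      (fun u : Rˣ => (fun i => h i * (u : R)) = fun i => h i * (u₀ : R))).card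
      = (Finset.univ.filter (fun u : Rˣ => ∀ i, h i * (u : R) = h i * (u₀ : R))).card := by
    congr 1
    apply Finset.filter_congr
    intro u _
    constructor
    · intro he i; exact congrFun he i
    · intro he; funext i; exact he i
  rw [this, fiber_card]

/-- the main column count -/
lemma colcount {k n : ℕ} (G : Matrix (Fin k) (Fin n) R) (r : ℝ)
    (hmod : ∀ j, ((Finset.univ.filter (fun j' =>
          {v : Fin k → R | ∃ t : R, v = fun i => G i j' * t} =
          {v : Fin k → R | ∃ t : R, v = fun i => G i j * t})).card : ℝ) =
        r * ((Finset.image (fun u : Rˣ => fun i => G i j * (u : R))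
                (Finset.univ : Finset Rˣ)).card : ℝ))
    (j' : Fin n) :
    ((∑ j : Fin n, (Finset.univ.filter
        (fun u : Rˣ => ∀ i, G i j = G i j' * (u : R))).card : ℕ) : ℝ)
      = r * (Fintype.card Rˣ : ℝ) := by
  classical
  have percol : ∀ j : Fin n,
      (Finset.univ.filter (fun u : Rˣ => ∀ i, G i j = G i j' * (u : R))).card
      = if ({v : Fin k → R | ∃ t : R, v = fun i => G i j * t} =
            {v : Fin k → R | ∃ t : R, v = fun i => G i j' * t})
        then (Finset.univ.filter
          (fun z : Rˣ => ∀ i, G i j' * (z : R) = G i j')).card else 0 := by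
    intro j
    by_cases hP : ({v : Fin k → R | ∃ t : R, v = fun i => G i j * t} =
            {v : Fin k → R | ∃ t : R, v = fun i => G i j' * t})
    · rw [if_pos hP]
      have hcolj : (fun i => G i j) ∈ {v : Fin k → R | ∃ t : R, v = fun i => G i j * t} :=
        ⟨1, by funext i; rw [mul_one]⟩
      rw [hP] at hcolj
      obtain ⟨s, hs⟩ := hcolj
      have hcolj' : (fun i => G i j') ∈ {v : Fin k → R | ∃ t : R, v = fun i => G i j' * t} :=
        ⟨1, by funext i; rw [mul_one]⟩
      rw [← hP] at hcolj'
      obtain ⟨b₂, hb₂⟩ := hcolj'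
      have hsb : ∀ i, G i j' * (s * b₂) = G i j' := by
        intro i
        have h1 : G i j = G i j' * s := congrFun hs i
        have h2 : G i j' = G i j * b₂ := congrFun hb₂ i
        rw [← mul_assoc, ← h1, ← h2]
      obtain ⟨u, hu, huval⟩ := gen_unit (fun i => G i j') s b₂ hsb
      obtain ⟨u₀, rfl⟩ := hu
      have hu₀ : ∀ i, G i j = G i j' * (u₀ : R) := by
        intro i
        rw [huval i]
        exact congrFun hs i
      have heq : (Finset.univ.filter (fun u : Rˣ => ∀ i, G i j = G i j' * (u : R)))
          = (Finset.univ.filter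
              (fun u : Rˣ => ∀ i, G i j' * (u : R) = G i j' * (u₀ : R))) := by
        apply Finset.filter_congr
        intro u _
        constructor
        · intro hc i
          rw [← hc i]
          exact hu₀ i
        · intro hc i
          rw [hc i]
          exact hu₀ i
      rw [heq]
      exact fiber_card (fun i => G i j') u₀
    · rw [if_neg hP]
      rw [Finset.card_eq_zero, Finset.filter_eq_empty_iff]
      intro u _
      intro hc
      apply hP
      ext v
      constructor
      · rintro ⟨t, rfl⟩
        refine ⟨(u : R) * t, ?_⟩
        funext i
        rw [hc i, mul_assoc]
      · rintro ⟨t, rfl⟩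
        refine ⟨((u⁻¹ : Rˣ) : R) * t, ?_⟩
        funext i
        rw [hc i, mul_assoc, ← mul_assoc ((u:R)) _ t, ← Units.val_mul, mul_inv_cancel,
          Units.val_one, one_mul]
  rw [Finset.sum_congr rfl (fun j _ => percol j), ← Finset.sum_filter,
    Finset.sum_const, smul_eq_mul, Nat.cast_mul, hmod j', mul_assoc, ← Nat.cast_mul,
    ← orbit_stab (fun i => G i j')]


noncomputable def betaU (hχ : IsGenChar χ) : Rˣ ≃* Rˣ :=
  Units.mapEquiv (betaR hχ).toMulEquiv

lemma betaU_coe (hχ : IsGenChar χ) (u : Rˣ) :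
    ((betaU hχ u : Rˣ) : R) = betaR hχ (u : R) := rfl

lemma cond_iff (aa bb : R) (u₀ v₀ : Rˣ) :
    (aa * (u₀ : R) + bb * (v₀ : R) = 0) ↔ (aa = bb * (((-v₀) * u₀⁻¹ : Rˣ) : R)) := by
  have hcoe : (((-v₀) * u₀⁻¹ : Rˣ) : R) = -(v₀ : R) * ((u₀⁻¹ : Rˣ) : R) := by
    rw [Units.val_mul, Units.val_neg]
  rw [hcoe, ← mul_assoc, mul_neg, Units.eq_mul_inv_iff_mul_eq, eq_neg_iff_add_eq_zero]

lemma sum_v_flip (hχ : IsGenChar χ) (a : R) :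
    ∑ v₀ : Rˣ, χ (a * (v₀ : R)) = ∑ v : Rˣ, χ ((v : R) * a) := by
  refine Fintype.sum_equiv (betaU hχ).toEquiv _ _ (fun v₀ => ?_)
  show χ (a * (v₀ : R)) = χ (((betaU hχ v₀ : Rˣ) : R) * a)
  rw [betaU_coe, betaR_spec]

lemma main_sum (hχ : IsGenChar χ) {k n : ℕ} (G : Matrix (Fin k) (Fin n) R) (r : ℝ)
    (hcolnz : ∀ j, (fun i => G i j) ≠ (0 : Fin k → R))
    (hmod : ∀ j, ((Finset.univ.filter (fun j' =>
          {v : Fin k → R | ∃ t : R, v = fun i => G i j' * t} =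
          {v : Fin k → R | ∃ t : R, v = fun i => G i j * t})).card : ℝ) =
        r * ((Finset.image (fun u : Rˣ => fun i => G i j * (u : R))
                (Finset.univ : Finset Rˣ)).card : ℝ))
    (d : Fin n → R) :
    ∑ x : Fin k → R, whomV χ (fun j => ∑ i, x i * G i j)
        * whomV χ ((fun j => ∑ i, x i * G i j) + d)
      = (Fintype.card R : ℝ) ^ k * ((n : ℝ) ^ 2 + r * n - r * whomV χ d) := by
  classical
  set qs : ℝ := (Fintype.card Rˣ : ℝ) with hqs
  have hqs0 : qs ≠ 0 := Nat.cast_ne_zero.2 Fintype.card_ne_zero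
  set A : Fin n → (Fin k → R) → ℂ :=
    fun j x => ∑ u : Rˣ, χ ((u : R) * (∑ i, x i * G i j)) with hA
  set B : Fin n → (Fin k → R) → ℂ :=
    fun j x => ∑ v : Rˣ, χ ((v : R) * ((∑ i, x i * G i j) + d j)) with hB
  have hcol : ∀ j : Fin n, ∃ i, G i j ≠ 0 := by
    intro j
    by_contra hc
    push_neg at hc
    exact hcolnz j (funext hc)
  have hAsum : ∀ j, ∑ x : Fin k → R, A j x = 0 := by
    intro j
    rw [hA, Finset.sum_comm]
    refine Finset.sum_eq_zero (fun u _ => ?_)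
    have := sum_x_char hχ (fun i => G i j) (hcol j) u 0
    simpa using this
  have hBsum : ∀ j, ∑ x : Fin k → R, B j x = 0 := by
    intro j
    rw [hB, Finset.sum_comm]
    refine Finset.sum_eq_zero (fun v _ => ?_)
    exact sum_x_char hχ (fun i => G i j) (hcol j) v (d j)
  -- the core identity
  have hcore : ∀ j' : Fin n,
      ∑ j, ∑ x : Fin k → R, A j x * B j' x
        = ((r * qs : ℝ) : ℂ) * (((Fintype.card R : ℝ) ^ k : ℝ) : ℂ)
            * ∑ v : Rˣ, χ ((v : R) * d j') := by
    intro j'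
    have hds : ∀ j : Fin n, ∑ x : Fin k → R, A j x * B j' x
        = ∑ u₀ : Rˣ, ∑ v₀ : Rˣ, χ (d j' * (v₀ : R)) *
            (if (∀ i, G i j * (u₀ : R) + G i j' * (v₀ : R) = 0)
              then ((Fintype.card R : ℂ)) ^ k else 0) := by
      intro j
      have h1 : ∑ x : Fin k → R, A j x * B j' x
          = ∑ u : Rˣ, ∑ v : Rˣ, ∑ x : Fin k → R,
              χ ((u : R) * (∑ i, x i * G i j))
                * χ ((v : R) * ((∑ i, x i * G i j') + d j')) := by
        rw [hA, hB]
        simp only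
        rw [Finset.sum_congr rfl (fun x _ => Fintype.sum_mul_sum _ _)]
        rw [Finset.sum_comm]
        refine Finset.sum_congr rfl (fun u _ => ?_)
        rw [Finset.sum_comm]
      rw [h1]
      refine (Fintype.sum_equiv (betaU hχ).toEquiv _ _ (fun u₀ => ?_)).symm
      refine Fintype.sum_equiv (betaU hχ).toEquiv _ _ (fun v₀ => ?_)
      exact (double_sum hχ (fun i => G i j) (fun i => G i j') (d j') u₀ v₀).symm
    rw [Finset.sum_congr rfl (fun j _ => hds j)]
    have hre : ∀ (j : Fin n) (v₀ : Rˣ),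
        ∑ u₀ : Rˣ, χ (d j' * (v₀ : R)) *
            (if (∀ i, G i j * (u₀ : R) + G i j' * (v₀ : R) = 0)
              then ((Fintype.card R : ℂ)) ^ k else 0)
          = χ (d j' * (v₀ : R)) * ((Fintype.card R : ℂ)) ^ k
            * ((Finset.univ.filter
                (fun w : Rˣ => ∀ i, G i j = G i j' * (w : R))).card : ℂ) := by
      intro j v₀
      rw [← Finset.mul_sum]
      have hcards : (Finset.univ.filter
            (fun u₀ : Rˣ => ∀ i, G i j * (u₀ : R) + G i j' * (v₀ : R) = 0)).card
          = (Finset.univ.filter (fun w : Rˣ => ∀ i, G i j = G i j' * (w : R))).card := by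
        apply Finset.card_nbij (fun u₀ => (-v₀) * u₀⁻¹)
        · intro u₀ hu
          simp only [Finset.mem_coe, Finset.mem_filter, Finset.mem_univ, true_and] at hu ⊢
          intro i
          exact (cond_iff _ _ _ _).mp (hu i)
        · intro a _ b _ hab
          simp only at hab
          have := mul_left_cancel hab
          exact inv_injective this
        · intro w hw
          have hw' : ∀ i, G i j = G i j' * (w : R) := by
            have := Finset.mem_coe.mp hw
            simp only [Finset.mem_filter, Finset.mem_univ, true_and] at this
            exact this
          have hkey : (-v₀) * (w⁻¹ * (-v₀))⁻¹ = w := by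
            group
          refine ⟨w⁻¹ * (-v₀), ?_, hkey⟩
          apply Finset.mem_coe.mpr
          simp only [Finset.mem_filter, Finset.mem_univ, true_and]
          intro i
          apply (cond_iff _ _ _ _).mpr
          rw [hkey]
          exact hw' i
      have hsum : ∑ u₀ : Rˣ, (if (∀ i, G i j * (u₀ : R) + G i j' * (v₀ : R) = 0)
            then ((Fintype.card R : ℂ)) ^ k else 0)
          = ((Finset.univ.filter
              (fun w : Rˣ => ∀ i, G i j = G i j' * (w : R))).card : ℂ)
            * ((Fintype.card R : ℂ)) ^ k := by
        rw [Finset.sum_ite, Finset.sum_const_zero, add_zero, Finset.sum_const,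
          nsmul_eq_mul, hcards]
      rw [hsum]
      ring
    rw [Finset.sum_congr rfl
      (fun j (_ : j ∈ Finset.univ) => Finset.sum_comm)]
    rw [Finset.sum_comm]
    rw [Finset.sum_congr rfl (fun v₀ _ => Finset.sum_congr rfl (fun j _ => hre j v₀))]
    have hcnt : (∑ j, (((Finset.univ.filter
          (fun w : Rˣ => ∀ i, G i j = G i j' * (w : R))).card : ℕ) : ℂ))
        = ((r * qs : ℝ) : ℂ) := by
      have h0 := colcount G r hmod j'
      rw [← hqs] at h0  -- maybe no-op
      calc ∑ j, (((Finset.univ.filter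
            (fun w : Rˣ => ∀ i, G i j = G i j' * (w : R))).card : ℕ) : ℂ)
          = (((∑ j, (Finset.univ.filter
              (fun w : Rˣ => ∀ i, G i j = G i j' * (w : R))).card : ℕ) : ℝ) : ℂ) := by
            push_cast
            rfl
      _ = ((r * qs : ℝ) : ℂ) := by rw [h0]
    calc ∑ v₀ : Rˣ, ∑ j, χ (d j' * (v₀ : R)) * ((Fintype.card R : ℂ)) ^ k
            * ((Finset.univ.filter
                (fun w : Rˣ => ∀ i, G i j = G i j' * (w : R))).card : ℂ)
        = ∑ v₀ : Rˣ, χ (d j' * (v₀ : R)) * ((Fintype.card R : ℂ)) ^ k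
            * ∑ j, ((Finset.univ.filter
                (fun w : Rˣ => ∀ i, G i j = G i j' * (w : R))).card : ℂ) := by
          refine Finset.sum_congr rfl (fun v₀ _ => ?_)
          rw [Finset.mul_sum]
    _ = ∑ v₀ : Rˣ, χ (d j' * (v₀ : R)) * ((Fintype.card R : ℂ)) ^ k
            * ((r * qs : ℝ) : ℂ) := by
          refine Finset.sum_congr rfl (fun v₀ _ => ?_)
          rw [hcnt]
    _ = (∑ v₀ : Rˣ, χ (d j' * (v₀ : R))) * (((Fintype.card R : ℂ)) ^ k
            * ((r * qs : ℝ) : ℂ)) := by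
          rw [Finset.sum_mul]
          refine Finset.sum_congr rfl (fun v₀ _ => ?_)
          ring
    _ = ((r * qs : ℝ) : ℂ) * (((Fintype.card R : ℝ) ^ k : ℝ) : ℂ)
            * ∑ v : Rˣ, χ ((v : R) * d j') := by
          rw [sum_v_flip hχ]
          push_cast
          ring
  -- now the outer assembly
  have hwv : ∀ x : Fin k → R, whomV χ (fun j => ∑ i, x i * G i j)
      * whomV χ ((fun j => ∑ i, x i * G i j) + d)
      = ∑ j' : Fin n, ∑ j : Fin n,
          (1 - qs⁻¹ * (A j x).re) * (1 - qs⁻¹ * (B j' x).re) := by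
    intro x
    have e1 : whomV χ (fun j => ∑ i, x i * G i j) = ∑ j, (1 - qs⁻¹ * (A j x).re) := by
      rw [whomV]
      exact Finset.sum_congr rfl (fun j _ => whomR_eq _)
    have e2 : whomV χ ((fun j => ∑ i, x i * G i j) + d)
        = ∑ j', (1 - qs⁻¹ * (B j' x).re) := by
      rw [whomV]
      refine Finset.sum_congr rfl (fun j _ => ?_)
      have h3 : ((fun j => ∑ i, x i * G i j) + d) j = (∑ i, x i * G i j) + d j := rfl
      rw [h3, whomR_eq]
    rw [e1, e2, Finset.sum_mul_sum, Finset.sum_comm]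
  rw [Finset.sum_congr rfl (fun x _ => hwv x), Finset.sum_comm]
  rw [Finset.sum_congr rfl
    (fun j' (_ : j' ∈ Finset.univ) => Finset.sum_comm)]
  have hinner : ∀ (j' j : Fin n), ∑ x : Fin k → R,
      (1 - qs⁻¹ * (A j x).re) * (1 - qs⁻¹ * (B j' x).re)
      = (Fintype.card R : ℝ) ^ k
        + qs⁻¹ * qs⁻¹ * (∑ x : Fin k → R, A j x * B j' x).re := by
    intro j' j
    have expand : ∀ x : Fin k → R, (1 - qs⁻¹ * (A j x).re) * (1 - qs⁻¹ * (B j' x).re)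
        = 1 - qs⁻¹ * (A j x).re - qs⁻¹ * (B j' x).re
          + qs⁻¹ * qs⁻¹ * ((A j x) * (B j' x)).re := by
      intro x
      have him : (A j x).im = 0 := by
        rw [hA]
        exact sum_units_im_zero _
      rw [← re_mul_re _ _ him]
      ring
    rw [Finset.sum_congr rfl (fun x _ => expand x)]
    rw [Finset.sum_add_distrib, Finset.sum_sub_distrib, Finset.sum_sub_distrib]
    rw [← Finset.mul_sum, ← Finset.mul_sum, ← Finset.mul_sum]
    rw [← Complex.re_sum, ← Complex.re_sum, ← Complex.re_sum, hAsum j, hBsum j']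
    rw [Finset.sum_const, Finset.card_univ]
    simp only [Complex.zero_re, mul_zero, sub_zero, nsmul_eq_mul, mul_one]
    congr 1
    rw [Fintype.card_fun, Fintype.card_fin]
    push_cast
    ring
  rw [Finset.sum_congr rfl (fun j' _ => Finset.sum_congr rfl (fun j _ => hinner j' j))]
  have hrev : ∀ z : R, (∑ u : Rˣ, χ ((u : R) * z)).re = qs * (1 - whomR χ z) := by
    intro z
    have h1 := whomR_eq (χ := χ) z
    have h2 : qs⁻¹ * (∑ u : Rˣ, χ ((u : R) * z)).re = 1 - whomR χ z := by
      rw [← hqs] at h1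
      linarith
    calc (∑ u : Rˣ, χ ((u : R) * z)).re
        = qs * (qs⁻¹ * (∑ u : Rˣ, χ ((u : R) * z)).re) := by
          field_simp
    _ = qs * (1 - whomR χ z) := by rw [h2]
  have hperj' : ∀ j' : Fin n,
      ∑ j : Fin n, ((Fintype.card R : ℝ) ^ k
        + qs⁻¹ * qs⁻¹ * (∑ x : Fin k → R, A j x * B j' x).re)
      = (n : ℝ) * (Fintype.card R : ℝ) ^ k
        + r * (Fintype.card R : ℝ) ^ k * (1 - whomR χ (d j')) := by
    intro j'
    rw [Finset.sum_add_distrib, Finset.sum_const, Finset.card_univ, Fintype.card_fin,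
      ← Finset.mul_sum, ← Complex.re_sum, hcore j']
    have hQre : (((r * qs : ℝ) : ℂ) * (((Fintype.card R : ℝ) ^ k : ℝ) : ℂ)
        * ∑ v : Rˣ, χ ((v : R) * d j')).re
        = (r * qs) * ((Fintype.card R : ℝ) ^ k) * (qs * (1 - whomR χ (d j'))) := by
      rw [← Complex.ofReal_mul, Complex.re_ofReal_mul, hrev]
    rw [hQre, nsmul_eq_mul]
    field_simp
  rw [Finset.sum_congr rfl (fun j' _ => hperj' j')]
  rw [Finset.sum_add_distrib, Finset.sum_const, Finset.card_univ, Fintype.card_fin,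
    ← Finset.mul_sum]
  have hwd : ∑ j' : Fin n, (1 - whomR χ (d j')) = (n : ℝ) - whomV χ d := by
    rw [Finset.sum_sub_distrib, Finset.sum_const, Finset.card_univ, Fintype.card_fin,
      whomV]
    simp
  rw [hwd, nsmul_eq_mul]
  ring


end CharSums
end ModCorr

/-- For a modular linear code `C ≤ R^n` of index `r` over a finite Frobenius
ring, generated by the columns of `G ∈ R^{k×n}`, and any `d ∈ R^n`:
`Σ_{c∈C} w_hom(c)·w_hom(c+d) = |C|·(n² + rn − r·w_hom(d))`. -/
theorem modular_correlation {R : Type} [Ring R] [Fintype R]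
    (χ : AddChar R ℂ) (hχ : IsGenChar χ)
    (k n : ℕ) (G : Matrix (Fin k) (Fin n) R) (r : ℝ)
    (hcolnz : ∀ j, (fun i => G i j) ≠ (0 : Fin k → R))
    (hmod : ∀ j, ((Finset.univ.filter (fun j' =>
          {v : Fin k → R | ∃ t : R, v = fun i => G i j' * t} =
          {v : Fin k → R | ∃ t : R, v = fun i => G i j * t})).card : ℝ) =
        r * ((Finset.image (fun u : Rˣ => fun i => G i j * (u : R))
                (Finset.univ : Finset Rˣ)).card : ℝ))
    (C : Finset (Fin n → R))
    (hC : C = Finset.image (fun x : Fin k → R => fun j => ∑ i, x i * G i j)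
                Finset.univ)
    (d : Fin n → R) :
    ∑ c ∈ C, whomV χ c * whomV χ (c + d) =
      (C.card : ℝ) * ((n : ℝ) ^ 2 + r * n - r * whomV χ d) := by
  classical
  set μ : (Fin k → R) → (Fin n → R) := fun x => fun j => ∑ i, x i * G i j with hμ
  set F : (Fin n → R) → ℝ := fun c => whomV χ c * whomV χ (c + d) with hF
  have hμsub : ∀ x y : Fin k → R, μ (x - y) = μ x - μ y := by
    intro x y
    funext j
    show ∑ i, (x i - y i) * G i j = (∑ i, x i * G i j) - ∑ i, y i * G i j
    rw [← Finset.sum_sub_distrib]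
    exact Finset.sum_congr rfl (fun i _ => sub_mul _ _ _)
  have hμadd : ∀ x y : Fin k → R, μ (x + y) = μ x + μ y := by
    intro x y
    funext j
    show ∑ i, (x i + y i) * G i j = (∑ i, x i * G i j) + ∑ i, y i * G i j
    rw [← Finset.sum_add_distrib]
    exact Finset.sum_congr rfl (fun i _ => add_mul _ _ _)
  -- fibers all have the same cardinality K₀
  set K : ℕ := (Finset.univ.filter (fun x : Fin k → R => μ x = μ 0)).card with hK
  have hfib : ∀ c ∈ C, (Finset.univ.filter (fun x : Fin k → R => μ x = c)).card = K := by
    intro c hc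
    rw [hC] at hc
    obtain ⟨x₀, _, hx₀⟩ := Finset.mem_image.mp hc
    rw [hK]
    apply Finset.card_nbij (fun x => x - x₀)
    · intro x hx
      simp only [Finset.mem_coe, Finset.mem_filter, Finset.mem_univ, true_and] at hx ⊢
      rw [hμsub, hx, ← hx₀]
      funext j
      show (μ x₀ j) - (μ x₀ j) = ∑ i, (0 : Fin k → R) i * G i j
      simp
    · intro a _ b _ hab
      simpa using congrArg (fun t => t + x₀) hab
    · intro y hy
      have hy' : μ y = μ 0 := by
        have := Finset.mem_coe.mp hy
        simp only [Finset.mem_filter, Finset.mem_univ, true_and] at this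
        exact this
      refine ⟨y + x₀, ?_, by simp⟩
      apply Finset.mem_coe.mpr
      simp only [Finset.mem_filter, Finset.mem_univ, true_and]
      rw [hμadd, hy', ← hx₀]
      funext j
      show (∑ i, (0 : Fin k → R) i * G i j) + μ x₀ j = μ x₀ j
      simp
  have hmaps : ∀ x : Fin k → R, x ∈ Finset.univ → μ x ∈ C := by
    intro x _
    rw [hC]
    exact Finset.mem_image_of_mem _ (Finset.mem_univ x)
  -- total count
  have hcardtot : (Fintype.card R) ^ k = C.card * K := by
    have h1 : (Finset.univ : Finset (Fin k → R)).card = ∑ c ∈ C,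
        (Finset.univ.filter (fun x : Fin k → R => μ x = c)).card :=
      Finset.card_eq_sum_card_fiberwise hmaps
    rw [Finset.sum_congr rfl hfib, Finset.sum_const, smul_eq_mul] at h1
    rw [← h1, Finset.card_univ, Fintype.card_fun, Fintype.card_fin]
  -- sum over fibers
  have hsplit : ∑ x : Fin k → R, F (μ x) = ∑ c ∈ C, (K : ℝ) * F c := by
    rw [← Finset.sum_fiberwise_of_maps_to hmaps (fun x => F (μ x))]
    refine Finset.sum_congr rfl (fun c hc => ?_)
    have : ∀ x ∈ Finset.univ.filter (fun x : Fin k → R => μ x = c), F (μ x) = F c := by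
      intro x hx
      simp only [Finset.mem_filter, Finset.mem_univ, true_and] at hx
      rw [hx]
    rw [Finset.sum_congr rfl this, Finset.sum_const, hfib c hc, nsmul_eq_mul]
  have hK0 : (0 : ℝ) < (K : ℝ) := by
    have : (0 : Fin k → R) ∈ Finset.univ.filter (fun x : Fin k → R => μ x = μ 0) :=
      Finset.mem_filter.mpr ⟨Finset.mem_univ _, rfl⟩
    have hpos : 0 < K := hK ▸ Finset.card_pos.mpr ⟨_, this⟩
    exact_mod_cast hpos
  -- apply main_sum
  have hms := ModCorr.main_sum hχ G r hcolnz hmod d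
  have hms' : ∑ x : Fin k → R, F (μ x)
      = (Fintype.card R : ℝ) ^ k * ((n : ℝ) ^ 2 + r * n - r * whomV χ d) := hms
  rw [hsplit, ← Finset.mul_sum] at hms'
  have hQ : ((Fintype.card R : ℝ)) ^ k = (C.card : ℝ) * (K : ℝ) := by
    rw [← Nat.cast_pow, hcardtot]
    push_cast
    ring
  rw [hQ] at hms'
  apply mul_left_cancel₀ (ne_of_gt hK0)
  exact hms'.trans (by ring)
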